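/- The group ℤ[1/6] ⋊_{3/2} ℤ is residually finite: for every element g ≠ 1 of ℤ[1/6] ⋊_{3/2} ℤ there exist a finite group F and a group homomorphism φ : ℤ[1/6] ⋊_{3/2} ℤ → F with φ(g) ≠ 1. -/

import Mathlib

/-- The relator of the Baumslag–Solitar group `BS(2,3) = ⟨a, t ∣ t a² t⁻¹ a⁻³⟩`,
with `a = FreeGroup.of 0` and `t = FreeGroup.of 1`. -/
def bsRels : Set (FreeGroup (Fin 2)) :=
  {FreeGroup.of 1 * FreeGroup.of 0 ^ 2 * (FreeGroup.of 1)⁻¹ * (FreeGroup.of 0 ^ 3)⁻¹}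

/-- The Baumslag–Solitar group `BS(2,3)`. -/
abbrev BS23 : Type := PresentedGroup bsRels

/-- The additive group `ℤ[1/6] = {m / 6^k : m ∈ ℤ, k ≥ 0} ⊆ ℚ`. -/
def Zinv6 : AddSubgroup ℚ where
  carrier := {q : ℚ | ∃ (m : ℤ) (k : ℕ), q = m / 6 ^ k}
  zero_mem' := ⟨0, 0, by norm_num⟩
  add_mem' := by
    rintro a b ⟨m, k, rfl⟩ ⟨m', k', rfl⟩
    refine ⟨m * 6 ^ k' + m' * 6 ^ k, k + k', ?_⟩
    have h1 : ((6 : ℚ)) ^ k ≠ 0 := by positivity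
    have h2 : ((6 : ℚ)) ^ k' ≠ 0 := by positivity
    push_cast
    field_simp [pow_add]
    ring
  neg_mem' := by
    rintro a ⟨m, k, rfl⟩
    exact ⟨-m, k, by push_cast; ring⟩

lemma mul_three_halves_mem {q : ℚ} (hq : q ∈ Zinv6) : (3 / 2 : ℚ) * q ∈ Zinv6 := by
  obtain ⟨m, k, rfl⟩ := hq
  refine ⟨9 * m, k + 1, ?_⟩
  have h6 : ((6 : ℚ)) ≠ 0 := by norm_num
  push_cast
  field_simp
  ring

lemma mul_two_thirds_mem {q : ℚ} (hq : q ∈ Zinv6) : (2 / 3 : ℚ) * q ∈ Zinv6 := by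
  obtain ⟨m, k, rfl⟩ := hq
  refine ⟨4 * m, k + 1, ?_⟩
  have h6 : ((6 : ℚ)) ≠ 0 := by norm_num
  push_cast
  field_simp
  ring

/-- Multiplication by `3/2` as an additive automorphism of `ℤ[1/6]`. -/
def threeHalves : Zinv6 ≃+ Zinv6 where
  toFun q := ⟨(3 / 2 : ℚ) * q, mul_three_halves_mem q.2⟩
  invFun q := ⟨(2 / 3 : ℚ) * q, mul_two_thirds_mem q.2⟩
  left_inv q := by ext; simp; ring_nf
  right_inv q := by ext; simp; ring_nf
  map_add' a b := by ext; simp [mul_add]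

/-- The semidirect product `ℤ[1/6] ⋊_{3/2} ℤ`, where the generator `1 ∈ ℤ` acts on
`ℤ[1/6]` by multiplication by `3/2`. -/
abbrev Z16Rtimes : Type :=
  SemidirectProduct (Multiplicative Zinv6) (Multiplicative ℤ)
    (zpowersHom (MulAut (Multiplicative Zinv6)) (AddEquiv.toMultiplicative threeHalves))

lemma one_mem_Zinv6 : (1 : ℚ) ∈ Zinv6 := ⟨1, 0, by norm_num⟩


/-! ### Auxiliary material for the proof of residual finiteness -/

lemma aux_num_den_eq (x : ℚ) : (x.num:ℚ) = x * x.den := by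
  have := Rat.num_div_den x; field_simp at this ⊢; exact this

lemma aux_key_add (x y : ℚ) :
    ((x+y).num * x.den * y.den : ℤ) = (x.num * y.den + y.num * x.den) * (x+y).den := by
  have h : (((x+y).num * x.den * y.den : ℤ) : ℚ)
      = ((x.num * y.den + y.num * x.den) * (x+y).den : ℤ) := by
    push_cast
    rw [aux_num_den_eq x, aux_num_den_eq y, aux_num_den_eq (x+y)]; ring
  exact_mod_cast h

lemma aux_key_smul (x : ℚ) :
    (((3/2 : ℚ)*x).num * (2 * x.den) : ℤ) = 3 * x.num * ((3/2 : ℚ)*x).den := by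
  have h : ((((3/2 : ℚ)*x).num * (2 * x.den) : ℤ) : ℚ) = (3 * x.num * ((3/2 : ℚ)*x).den : ℤ) := by
    push_cast
    rw [aux_num_den_eq x, aux_num_den_eq ((3/2 : ℚ)*x)]; ring
  exact_mod_cast h

/-- The map `AddAut A →* MulAut (Multiplicative A)`. -/
def auxAddAutToMulAut (A : Type*) [AddGroup A] : Multiplicative (AddAut A) →* MulAut (Multiplicative A) where
  toFun e := AddEquiv.toMultiplicative (Multiplicative.toAdd e)
  map_one' := rfl
  map_mul' _ _ := rfl

section AuxP

variable (p : ℕ) [Fact p.Prime]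

/-- Reduction of a rational mod `p`, as `num * den⁻¹`. -/
def auxE (x : ℚ) : ZMod p := (x.num : ZMod p) * (x.den : ZMod p)⁻¹

lemma auxE_add {x y : ℚ} (hx : (x.den : ZMod p) ≠ 0) (hy : (y.den : ZMod p) ≠ 0)
    (hxy : ((x+y).den : ZMod p) ≠ 0) : auxE p (x+y) = auxE p x + auxE p y := by
  have k : ((x+y).num : ZMod p) * x.den * y.den
      = (x.num * y.den + y.num * x.den) * (x+y).den := by
    exact_mod_cast congrArg (Int.cast : ℤ → ZMod p) (aux_key_add x y)
  unfold auxE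
  field_simp
  linear_combination k

lemma auxE_smul {x : ℚ} (hx : (x.den : ZMod p) ≠ 0) (h2 : (2 : ZMod p) ≠ 0)
    (hsx : (((3/2:ℚ)*x).den : ZMod p) ≠ 0) :
    auxE p ((3/2:ℚ)*x) = 3 * (2:ZMod p)⁻¹ * auxE p x := by
  have k : (((3/2:ℚ)*x).num : ZMod p) * (2 * x.den) = 3 * x.num * (((3/2:ℚ)*x).den) := by
    exact_mod_cast congrArg (Int.cast : ℤ → ZMod p) (aux_key_smul x)
  obtain ⟨s, hs⟩ : ∃ s : ℚ, s = (3/2:ℚ)*x := ⟨_, rfl⟩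
  rw [← hs] at k hsx ⊢
  unfold auxE
  field_simp
  linear_combination k

lemma aux_den_ne (hp7 : 7 ≤ p) {x : ℚ} (hx : x ∈ Zinv6) : (x.den : ZMod p) ≠ 0 := by
  obtain ⟨m, k, rfl⟩ := hx
  have hdvd : (((m : ℚ) / 6 ^ k).den : ℤ) ∣ ((6:ℤ) ^ k) := by
    have : ((m : ℚ) / 6 ^ k) = Rat.divInt m (6 ^ k) := by
      rw [Rat.divInt_eq_div]; push_cast; ring
    rw [this]; exact Rat.den_dvd m (6 ^ k)
  intro h0
  rw [ZMod.natCast_eq_zero_iff] at h0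
  have hdvd' : ((m : ℚ) / 6 ^ k).den ∣ 6 ^ k := by exact_mod_cast hdvd
  have hp6 : p ∣ 6 := Nat.Prime.dvd_of_dvd_pow (Fact.out) (h0.trans hdvd')
  have := Nat.le_of_dvd (by norm_num) hp6
  omega

lemma aux_two_ne (hp7 : 7 ≤ p) : (2 : ZMod p) ≠ 0 := by
  have : ((2:ℕ) : ZMod p) ≠ 0 := by
    rw [Ne, ZMod.natCast_eq_zero_iff]
    intro h; have := Nat.le_of_dvd (by norm_num) h; omega
  simpa using this

lemma aux_three_ne (hp7 : 7 ≤ p) : (3 : ZMod p) ≠ 0 := by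
  have : ((3:ℕ) : ZMod p) ≠ 0 := by
    rw [Ne, ZMod.natCast_eq_zero_iff]
    intro h; have := Nat.le_of_dvd (by norm_num) h; omega
  simpa using this

/-- The multiplier `3/2` mod `p`. -/
def auxU : ZMod p := 3 * (2 : ZMod p)⁻¹

lemma auxU_ne (hp7 : 7 ≤ p) : auxU p ≠ 0 :=
  mul_ne_zero (aux_three_ne p hp7) (inv_ne_zero (aux_two_ne p hp7))

/-- The reduction `ℤ[1/6] →+ ZMod p`. -/
def auxF (hp7 : 7 ≤ p) : Zinv6 →+ ZMod p where
  toFun q := auxE p (q : ℚ)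
  map_zero' := by simp [auxE]
  map_add' a b := by
    have := auxE_add p (aux_den_ne p hp7 a.2) (aux_den_ne p hp7 b.2)
      (aux_den_ne p hp7 (a+b).2)
    simpa using this

lemma auxF_threeHalves (hp7 : 7 ≤ p) (q : Zinv6) :
    auxF p hp7 (threeHalves q) = auxU p * auxF p hp7 q :=
  auxE_smul p (aux_den_ne p hp7 q.2) (aux_two_ne p hp7) (aux_den_ne p hp7 (threeHalves q).2)

lemma auxF_threeHalves_symm (hp7 : 7 ≤ p) (q : Zinv6) :
    auxF p hp7 (threeHalves.symm q) = (auxU p)⁻¹ * auxF p hp7 q := by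
  have h := auxF_threeHalves p hp7 (threeHalves.symm q)
  rw [AddEquiv.apply_symm_apply] at h
  rw [h, inv_mul_cancel_left₀ (auxU_ne p hp7)]

lemma auxF_zpow (hp7 : 7 ≤ p) (n : ℤ) : ∀ q : Zinv6,
    auxF p hp7 (Multiplicative.toAdd
      (((AddEquiv.toMultiplicative threeHalves : MulAut (Multiplicative Zinv6)) ^ n)
        (Multiplicative.ofAdd q)))
      = (auxU p) ^ n * auxF p hp7 q := by
  induction n using Int.induction_on with
  | zero => intro q; simp
  | succ n ih =>
    intro q
    have h1 : (((AddEquiv.toMultiplicative threeHalves : MulAut (Multiplicative Zinv6)) ^ ((n:ℤ)+1))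
        (Multiplicative.ofAdd q))
        = (((AddEquiv.toMultiplicative threeHalves : MulAut (Multiplicative Zinv6)) ^ (n:ℤ))
          (Multiplicative.ofAdd (threeHalves q))) := by
      rw [zpow_add_one]; rfl
    rw [h1, ih (threeHalves q), auxF_threeHalves p hp7 q,
      zpow_add_one₀ (auxU_ne p hp7)]
    ring
  | pred n ih =>
    intro q
    have h1 : (((AddEquiv.toMultiplicative threeHalves : MulAut (Multiplicative Zinv6)) ^ (-(n:ℤ)-1))
        (Multiplicative.ofAdd q))
        = (((AddEquiv.toMultiplicative threeHalves : MulAut (Multiplicative Zinv6)) ^ (-(n:ℤ)))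
          (Multiplicative.ofAdd (threeHalves.symm q))) := by
      rw [zpow_sub_one]; rfl
    rw [h1, ih (threeHalves.symm q), auxF_threeHalves_symm p hp7 q,
      zpow_sub_one₀ (auxU_ne p hp7)]
    ring

/-- The action of units on `Multiplicative (ZMod p)`. -/
def auxPsi : (ZMod p)ˣ →* MulAut (Multiplicative (ZMod p)) :=
  (auxAddAutToMulAut (ZMod p)).comp (DistribMulAction.toAddAut (ZMod p)ˣ (ZMod p))

/-- The finite target group `ZMod p ⋊ (ZMod p)ˣ`. -/
abbrev AuxTarget : Type :=
  SemidirectProduct (Multiplicative (ZMod p)) (ZMod p)ˣ (auxPsi p)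

instance : Finite (AuxTarget p) :=
  Finite.of_equiv (Multiplicative (ZMod p) × (ZMod p)ˣ)
    ⟨fun x => ⟨x.1, x.2⟩, fun g => (g.left, g.right), fun _ => rfl, fun _ => rfl⟩

/-- The unit `3/2` mod `p`. -/
def auxUU (hp7 : 7 ≤ p) : (ZMod p)ˣ := Units.mk0 (auxU p) (auxU_ne p hp7)

lemma aux_compat (hp7 : 7 ≤ p) : ∀ g : Multiplicative ℤ,
    (AddMonoidHom.toMultiplicative (auxF p hp7)).comp
      ((zpowersHom (MulAut (Multiplicative Zinv6)) (AddEquiv.toMultiplicative threeHalves) g).toMonoidHom)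
    = ((auxPsi p) (zpowersHom (ZMod p)ˣ (auxUU p hp7) g)).toMonoidHom.comp
        (AddMonoidHom.toMultiplicative (auxF p hp7)) := by
  intro g
  refine MonoidHom.ext fun q => ?_
  show Multiplicative.ofAdd (auxF p hp7 (Multiplicative.toAdd
      (((AddEquiv.toMultiplicative threeHalves : MulAut (Multiplicative Zinv6)) ^ Multiplicative.toAdd g)
        (Multiplicative.ofAdd (Multiplicative.toAdd q)))))
    = Multiplicative.ofAdd ((((auxUU p hp7) ^ Multiplicative.toAdd g : (ZMod p)ˣ) : ZMod p)
        * auxF p hp7 (Multiplicative.toAdd q))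
  rw [auxF_zpow p hp7 (Multiplicative.toAdd g) (Multiplicative.toAdd q),
    Units.val_zpow_eq_zpow_val]
  rfl

/-- The homomorphism `Z16Rtimes →* AuxTarget p`. -/
def auxPhi (hp7 : 7 ≤ p) : Z16Rtimes →* AuxTarget p :=
  SemidirectProduct.map (AddMonoidHom.toMultiplicative (auxF p hp7))
    (zpowersHom (ZMod p)ˣ (auxUU p hp7)) (aux_compat p hp7)

end AuxP

/-- `ℤ[1/6] ⋊_{3/2} ℤ` is residually finite: every nontrivial element survives in a
homomorphism to some finite group. -/
theorem z16_rtimes_residually_finite :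
    ∀ g : Z16Rtimes, g ≠ 1 →
      ∃ (F : Type) (_ : Group F) (_ : Finite F) (φ : Z16Rtimes →* F), φ g ≠ 1 := by
  intro g hg
  by_cases hn : Multiplicative.toAdd g.right = 0
  · -- the `ℤ`-component is trivial, so the `ℤ[1/6]`-component is nontrivial
    have hq : ((Multiplicative.toAdd g.left : Zinv6) : ℚ) ≠ 0 := by
      intro h
      apply hg
      refine SemidirectProduct.ext ?_ ?_
      · show (g.left : Multiplicative Zinv6) = 1
        have : (Multiplicative.toAdd g.left : Zinv6) = 0 := Subtype.ext h
        simpa using this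
      · show (g.right : Multiplicative ℤ) = 1
        simpa using hn
    set x : Zinv6 := Multiplicative.toAdd g.left with hxdef
    have hnum : (x : ℚ).num ≠ 0 := Rat.num_ne_zero.mpr hq
    obtain ⟨p, hple, hp⟩ := Nat.exists_infinite_primes ((x : ℚ).num.natAbs + 7)
    haveI : Fact p.Prime := ⟨hp⟩
    have hp7 : 7 ≤ p := by omega
    refine ⟨AuxTarget p, inferInstance, inferInstance, auxPhi p hp7, ?_⟩
    intro h1
    have h2 : (AddMonoidHom.toMultiplicative (auxF p hp7)) g.left = 1 := by
      have := congrArg SemidirectProduct.left h1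
      simpa [auxPhi] using this
    have h3 : auxF p hp7 x = 0 := by
      have := congrArg Multiplicative.toAdd h2
      simpa using this
    have hnum_ne : (((x : ℚ).num : ZMod p)) ≠ 0 := by
      rw [Ne, ZMod.intCast_zmod_eq_zero_iff_dvd]
      intro hdvd
      have h5 : (p : ℤ) ∣ ((x : ℚ).num.natAbs : ℤ) := (Int.dvd_natAbs).mpr hdvd
      have h6 : p ∣ (x : ℚ).num.natAbs := by exact_mod_cast h5
      have := Nat.le_of_dvd (Int.natAbs_pos.mpr hnum) h6
      omega
    have hden_ne : (((x : ℚ).den : ZMod p))⁻¹ ≠ 0 :=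
      inv_ne_zero (aux_den_ne p hp7 x.2)
    exact mul_ne_zero hnum_ne hden_ne h3
  · -- the `ℤ`-component is nontrivial
    set n : ℤ := Multiplicative.toAdd g.right with hndef
    set N : ℕ := n.natAbs + 1 with hNdef
    refine ⟨Multiplicative (ZMod N), inferInstance, inferInstance,
      (AddMonoidHom.toMultiplicative (Int.castAddHom (ZMod N))).comp
        SemidirectProduct.rightHom, ?_⟩
    intro h1
    have h2 : ((n : ZMod N)) = 0 := by
      have := congrArg Multiplicative.toAdd h1
      simpa [SemidirectProduct.rightHom] using this
    rw [ZMod.intCast_zmod_eq_zero_iff_dvd] at h2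
    have h3 : N ∣ n.natAbs := by
      have := (Int.dvd_natAbs).mpr h2
      exact_mod_cast this
    have := Nat.le_of_dvd (Int.natAbs_pos.mpr hn) h3
    omega
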